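/- Let T, A be bounded linear operators on a complex Hilbert space H, f a unit vector with Af ≠ 0, λ = (Tf,Af)/(Af,Af), h = Tf - λAf, h ≠ 0. If (T* - λ̄A*)(T - λA)f = ‖h‖²·f, then ‖T*h‖² = |λ|²‖A*h‖² + ‖h‖⁴. -/

import Mathlib

open scoped InnerProductSpace
open ContinuousLinearMap

/-- stationarity implies ‖T*h‖² = |λ|²‖A*h‖² + ‖h‖⁴. -/
theorem stmt_3 {H : Type*} [NormedAddCommGroup H] [InnerProductSpace ℂ H] [CompleteSpace H]
    (T A : H →L[ℂ] H) (f : H) (hf : ‖f‖ = 1) (hAf : A f ≠ 0)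
    (lam : ℂ) (hlam : lam = ⟪A f, T f⟫_ℂ / ⟪A f, A f⟫_ℂ)
    (h : H) (hh : h = T f - lam • A f) (hhne : h ≠ 0)
    (hstat : (adjoint T - (starRingEnd ℂ lam) • adjoint A) ((T - lam • A) f)
      = ((‖h‖ : ℂ) ^ 2) • f) :
    ‖adjoint T h‖ ^ 2 = ‖lam‖ ^ 2 * ‖adjoint A h‖ ^ 2 + ‖h‖ ^ 4 := by
  have hAfAf : ⟪A f, A f⟫_ℂ ≠ 0 := by
    simpa [inner_self_eq_zero] using hAf
  -- orthogonality: ⟪A f, h⟫ = 0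
  have horth : ⟪A f, h⟫_ℂ = 0 := by
    rw [hh, inner_sub_right, inner_smul_right, hlam, div_mul_cancel₀ _ hAfAf, sub_self]
  -- key: T* h = conj lam • A* h + ‖h‖² • f
  have hTf : (T - lam • A) f = h := by
    simp [hh, sub_smul, ContinuousLinearMap.sub_apply]
  have hkey : adjoint T h = (starRingEnd ℂ lam) • adjoint A h + ((‖h‖ : ℂ) ^ 2) • f := by
    have := hstat
    rw [hTf] at this
    rw [ContinuousLinearMap.sub_apply, ContinuousLinearMap.smul_apply] at this
    linear_combination (norm := module) this
  have hinner : ⟪(starRingEnd ℂ lam) • adjoint A h, ((‖h‖ : ℂ) ^ 2) • f⟫_ℂ = 0 := by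
    rw [inner_smul_left, inner_smul_right]
    have : ⟪adjoint A h, f⟫_ℂ = ⟪h, A f⟫_ℂ := by
      rw [ContinuousLinearMap.adjoint_inner_left]
    rw [this, ← inner_conj_symm, horth]
    simp
  have hinner2 : ⟪((‖h‖ : ℂ) ^ 2) • f, (starRingEnd ℂ lam) • adjoint A h⟫_ℂ = 0 := by
    rw [← inner_conj_symm, hinner, map_zero]
  rw [hkey, ← @inner_self_eq_norm_sq ℂ, inner_add_add_self, hinner, hinner2]
  simp only [add_zero, zero_add, map_add, @inner_self_eq_norm_sq ℂ]
  rw [norm_smul, norm_smul]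
  simp [hf, Complex.norm_conj, mul_pow, ← pow_mul]
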